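/- Let β > 1. Then for every real x ≥ 1 the integral ∫_{−1}^{1} e^{−x·F_β(t)/2}·(1−t²)^{−1} dt is finite. -/
import Mathlib


open MeasureTheory

/-- The function `F_β`. -/
noncomputable def Fbeta (β t : ℝ) : ℝ :=
  1 / β * (1 / 2 * Real.log ((1 + t) / (1 - t))) ^ 2 + Real.log (1 - t ^ 2)

lemma quad_bound (c a u : ℝ) (hc : 0 < c) : -c * u ^ 2 + a * (2 * u) ≤ a ^ 2 / c := by
  rw [le_div_iff₀ hc]
  nlinarith [sq_nonneg (c * u - a)]

/-- For `β > 1` and every real `x ≥ 1` the integral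
`∫_{-1}^1 e^{-x F_β(t)/2} (1-t²)^{-1} dt` is finite. -/
theorem Fbeta_density_integrable (β : ℝ) (hβ : 1 < β) (x : ℝ) (hx : 1 ≤ x) :
    IntegrableOn (fun t : ℝ => Real.exp (-(x * Fbeta β t) / 2) / (1 - t ^ 2))
      (Set.Ioo (-1 : ℝ) 1) := by
  have hβ0 : (0 : ℝ) < β := lt_trans one_pos hβ
  have hx0 : (0 : ℝ) < x := lt_of_lt_of_le one_pos hx
  have hc : 0 < x / (2 * β) := by positivity
  set M : ℝ := Real.exp ((x / 2 + 1) ^ 2 / (x / (2 * β))) with hM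
  apply Measure.integrableOn_of_bounded (M := M)
  · exact (measure_Ioo_lt_top).ne
  · apply Measurable.aestronglyMeasurable
    have m1 : Measurable fun t : ℝ => Real.log ((1 + t) / (1 - t)) :=
      Real.measurable_log.comp ((measurable_const.add measurable_id).div
        (measurable_const.sub measurable_id))
    have m2 : Measurable fun t : ℝ => Real.log (1 - t ^ 2) :=
      Real.measurable_log.comp (measurable_const.sub (measurable_id.pow_const 2))
    have mF : Measurable (Fbeta β) :=
      (measurable_const.mul ((measurable_const.mul m1).pow_const 2)).add m2
    exact (Real.measurable_exp.comp
      (((measurable_const.mul mF).neg).div_const 2)).div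
      (measurable_const.sub (measurable_id.pow_const 2))
  · filter_upwards [ae_restrict_mem measurableSet_Ioo] with t ht
    obtain ⟨ht1, ht2⟩ := ht
    have h1 : (0 : ℝ) < 1 + t := by linarith
    have h2 : (0 : ℝ) < 1 - t := by linarith
    have hsq : (0 : ℝ) < 1 - t ^ 2 := by nlinarith
    set L : ℝ := 1 / 2 * Real.log ((1 + t) / (1 - t)) with hL
    set s : ℝ := Real.log (1 - t ^ 2) with hs
    set u : ℝ := |L| with hu
    have hLd : Real.log ((1 + t) / (1 - t)) = Real.log (1 + t) - Real.log (1 - t) :=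
      Real.log_div (ne_of_gt h1) (ne_of_gt h2)
    have hsd : s = Real.log (1 - t) + Real.log (1 + t) := by
      rw [hs, show (1 : ℝ) - t ^ 2 = (1 - t) * (1 + t) by ring,
        Real.log_mul (ne_of_gt h2) (ne_of_gt h1)]
    -- key inequality : -s ≤ 2 * u
    have hkey : -s ≤ 2 * u := by
      have h2u : 2 * u = |Real.log (1 + t) - Real.log (1 - t)| := by
        rw [hu, hL, hLd, abs_mul]
        rw [abs_of_pos (by norm_num : (0:ℝ) < 1/2)]
        ring
      rw [hsd, h2u]
      rcases le_total 0 t with h | h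
      · have ha : 0 ≤ Real.log (1 + t) := Real.log_nonneg (by linarith)
        have := le_abs_self (Real.log (1 + t) - Real.log (1 - t))
        linarith
      · have hb : 0 ≤ Real.log (1 - t) := Real.log_nonneg (by linarith)
        have := neg_abs_le (Real.log (1 + t) - Real.log (1 - t))
        linarith
    have hfpos : 0 < Real.exp (-(x * Fbeta β t) / 2) / (1 - t ^ 2) := by positivity
    rw [Real.norm_eq_abs, abs_of_pos hfpos]
    have hrw : Real.exp (-(x * Fbeta β t) / 2) / (1 - t ^ 2)
        = Real.exp (-(x * Fbeta β t) / 2 - s) := by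
      rw [Real.exp_sub, hs, Real.exp_log hsq]
    rw [hrw, hM, Real.exp_le_exp]
    have hF : Fbeta β t = 1 / β * L ^ 2 + s := rfl
    have e1 : -(x * Fbeta β t) / 2 - s = -(x / (2 * β)) * u ^ 2 + (x / 2 + 1) * (-s) := by
      rw [hF, hu, sq_abs]
      field_simp
      ring
    have e2 : (x / 2 + 1) * (-s) ≤ (x / 2 + 1) * (2 * u) :=
      mul_le_mul_of_nonneg_left hkey (by linarith)
    have e3 := quad_bound (x / (2 * β)) (x / 2 + 1) u hc
    linarith [e1 ▸ (by linarith : -(x / (2 * β)) * u ^ 2 + (x / 2 + 1) * (-s)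
      ≤ -(x / (2 * β)) * u ^ 2 + (x / 2 + 1) * (2 * u))]
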